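/- arXiv:1602.00936 — 3 statements merged into one kernel-verified Lean document; each statement's English description precedes it below -/
import Mathlib

section
/- Let X = A ∪ B ∪ {1} with A, B, {1} pairwise disjoint and A, B nonempty. Define the linear map Fac : A(X) → A(A∪{1}) ⊗ A(B∪{1}) by Fac(c) = c_A ⊗ c_B for a proper sequence c = {J_1,...,J_ν}, where c_A = {J_1∩(A∪{1}),...,J_ν∩(A∪{1})} mod ∅ and c_B = {J_1∩(B∪{1}),...,J_ν∩(B∪{1})} mod ∅. Then Fac is an algebra homomorphism: Fac(cf) = Fac(c)·Fac(f) for all c, f ∈ A(X). -/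
open scoped Classical

namespace GRF

variable {α : Type*} [DecidableEq α]

/-- `J` is a proper (nonempty, not everything) subset of `X`. -/
def IsProperSubset (X J : Finset α) : Prop := J ⊆ X ∧ J ≠ ∅ ∧ J ≠ X

/-- A proper sequence in `P(X)`: a nonempty list of pairwise disjoint nonempty
subsets of `X` with union `X`. -/
def IsProperSeq (X : Finset α) (c : List (Finset α)) : Prop :=
  c ≠ [] ∧ (∀ J ∈ c, J ≠ ∅) ∧ List.Pairwise (fun I J => I ∩ J = ∅) c ∧
    c.foldr (· ∪ ·) ∅ = X

/-- The product of two sequences: all `A_i ∩ B_j`, ordered first by `j` then by `i`,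
with empty intersections deleted. -/
noncomputable def seqMul (a b : List (Finset α)) : List (Finset α) :=
  ((b.map fun B => a.map fun A => A ∩ B).flatten).filter fun J => J ≠ ∅

/-- The set `S' = {J ⊆ X : X \ J ∈ S}` opposite to `S`. -/
def opp (X : Finset α) (S : Set (Finset α)) : Set (Finset α) :=
  {J | J ⊆ X ∧ X \ J ∈ S}

/-- A paracell associated to `X`. -/
def IsParacell (X : Finset α) (S : Set (Finset α)) : Prop :=
  S.Nonempty ∧ (∀ J ∈ S, IsProperSubset X J) ∧
    ∀ I ∈ S, ∀ J ∈ S, I ∩ J ∈ S ∨ I ∪ J ∈ S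

/-- A precell associated to `X`. -/
def IsPrecell (X : Finset α) (S : Set (Finset α)) : Prop :=
  IsParacell X S ∧ ∀ J : Finset α, IsProperSubset X J → J ∈ S ∨ X \ J ∈ S

/-- A cell associated to `X`: a precell admitting real weights with zero total sum,
positive on all members of the cell. -/
def IsCell (X : Finset α) (S : Set (Finset α)) : Prop :=
  IsPrecell X S ∧ ∃ s : α → ℝ,
    (∑ j ∈ X, s j) = 0 ∧ ∀ J ∈ S, 0 < ∑ j ∈ J, s j

/-- `Y ↓ S` for `S` a paracell associated to `X`. -/
def cellDown (Y X : Finset α) (S : Set (Finset α)) : Set (Finset α) :=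
  {J | IsProperSubset (Y ∪ X) J ∧ (J ∩ X = X ∨ J ∩ X ∈ S)}

/-- `Y ↑ S'` for `S'` a paracell associated to `X`. -/
def cellUp (Y X : Finset α) (S : Set (Finset α)) : Set (Finset α) :=
  {J | IsProperSubset (Y ∪ X) J ∧ (J ∩ X = ∅ ∨ J ∩ X ∈ S)}

/-- `Y ↓ j` for a single index `j`. -/
def ptDown (Y : Finset α) (j : α) : Set (Finset α) :=
  {J | IsProperSubset (insert j Y) J ∧ j ∈ J}

/-- `Y ↑ j` for a single index `j`. -/
def ptUp (Y : Finset α) (j : α) : Set (Finset α) :=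
  {J | IsProperSubset (insert j Y) J ∧ j ∉ J}

/-- The underlying vector space of the algebra `A(X)`: formal complex linear
combinations of sequences of subsets. -/
abbrev AX (α : Type*) [DecidableEq α] : Type _ := (List (Finset α)) →₀ ℂ

/-- The multiplication of `A(X)`, extending `seqMul` bilinearly. -/
noncomputable def amul (x y : AX α) : AX α :=
  x.sum fun a ca => y.sum fun b cb => Finsupp.single (seqMul a b) (ca * cb)

/-- The unit `{X}` of `A(X)`. -/
noncomputable def oneA (X : Finset α) : AX α := Finsupp.single [X] 1

/-- `Î = {I, X \ I}` as an element of `A(X)`. -/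
noncomputable def hatI (X I : Finset α) : AX α := Finsupp.single [I, X \ I] 1

/-- Product of a list of elements of `A(X)` (with unit `{X}`). -/
noncomputable def aprod (X : Finset α) (l : List (AX α)) : AX α :=
  l.foldr amul (oneA X)

/-- A `ν`-chain associated to `S'`: a proper sequence all of whose proper initial
partial unions lie in `S'`. -/
def IsChainFor (X : Finset α) (S' : Set (Finset α)) (c : List (Finset α)) : Prop :=
  IsProperSeq X c ∧
    ∀ r : ℕ, 0 < r → r < c.length → ((c.take r).foldr (· ∪ ·) ∅) ∈ S'

lemma IsProperSeq.nodup {X : Finset α} {c : List (Finset α)}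
    (h : IsProperSeq X c) : c.Nodup := by
  obtain ⟨-, hne, hpw, -⟩ := h
  refine List.Pairwise.imp_of_mem ?_ hpw
  intro a b ha _ hab
  intro h'
  subst h'
  exact hne a ha (by simpa using hab)

/-- `U_S = Σ_ν Σ_{ν-chains for S'} (−1)^{ν−1} {J_1,…,J_ν}`, as a function of the
opposite paracell `S'`. -/
noncomputable def US [Fintype α] (X : Finset α) (S' : Set (Finset α)) : AX α :=
  Finsupp.ofSupportFinite
    (fun c => if IsChainFor X S' c then (-1 : ℂ) ^ (c.length - 1) else 0)
    (Set.Finite.subset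
      (List.finite_length_le (Finset α) (Fintype.card (Finset α)))
      (by
        intro c hc
        have h : IsChainFor X S' c := by
          by_contra h
          simp [Function.mem_support, h] at hc
        exact h.1.nodup.length_le_card))

/-- The underlying vector space of `A(A∪{1}) ⊗ A(B∪{1})`. -/
abbrev AX2 (α : Type*) [DecidableEq α] : Type _ :=
  (List (Finset α) × List (Finset α)) →₀ ℂ

/-- The multiplication of the tensor product algebra. -/
noncomputable def tmul (x y : AX2 α) : AX2 α :=
  x.sum fun a ca => y.sum fun b cb =>
    Finsupp.single (seqMul a.1 b.1, seqMul a.2 b.2) (ca * cb)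

/-- The tensor `u ⊗ v` of two elements of `A(A∪{1})` and `A(B∪{1})`. -/
noncomputable def tens (u v : AX α) : AX2 α :=
  u.sum fun a ca => v.sum fun b cb => Finsupp.single (a, b) (ca * cb)

/-- The pair `(c_A, c_B)` of traces of a sequence `c` on `A∪{1}` and `B∪{1}`,
with empty sets deleted. -/
noncomputable def facSeq (A1 B1 : Finset α) (c : List (Finset α)) :
    List (Finset α) × List (Finset α) :=
  ((c.map fun J => J ∩ A1).filter fun J => J ≠ ∅,
   (c.map fun J => J ∩ B1).filter fun J => J ≠ ∅)

/-- The factorization map `Fac : A(X) → A(A∪{1}) ⊗ A(B∪{1})`. -/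
noncomputable def Fac (A1 B1 : Finset α) (x : AX α) : AX2 α :=
  x.sum fun c cc => Finsupp.single (facSeq A1 B1 c) cc

/-- The paracell `(S‖1,A)` built from opposite paracells `S`, `S'` relative to
`X = A ∪ B ∪ {o}`. -/
def restCell (A : Finset α) (o : α) (S S' : Set (Finset α)) : Set (Finset α) :=
  {J | IsProperSubset (insert o A) J ∧
    ((J ⊆ A ∧ J ∈ S) ∨ (o ∈ J ∧ A \ J ∈ S'))}



lemma filter_map_filter' {β γ : Type*} (g : β → γ) (p : β → Bool) (q : γ → Bool)
    (h : ∀ x, p x = false → q (g x) = false) (l : List β) :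
    ((l.filter p).map g).filter q = (l.map g).filter q := by
  induction l with
  | nil => rfl
  | cons x l ih =>
    rcases hx : p x with _ | _
    · simp [List.filter_cons, hx, h x hx, ih]
    · simp [List.filter_cons, hx, ih]

lemma seqMul_nil (a : List (Finset α)) : seqMul a [] = [] := by simp [seqMul]

lemma seqMul_cons (a : List (Finset α)) (B : Finset α) (b : List (Finset α)) :
    seqMul a (B :: b) =
      ((a.map fun Ai => Ai ∩ B).filter fun J => J ≠ ∅) ++ seqMul a b := by
  simp [seqMul, List.filter_append]

lemma trace_seqMul (A1 : Finset α) (a b : List (Finset α)) :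
    ((seqMul a b).map fun J => J ∩ A1).filter (fun J => J ≠ ∅) =
      seqMul ((a.map fun J => J ∩ A1).filter fun J => J ≠ ∅)
        ((b.map fun J => J ∩ A1).filter fun J => J ≠ ∅) := by
  induction b with
  | nil => simp [seqMul_nil]
  | cons B b ih =>
    rw [seqMul_cons, List.map_append, List.filter_append, ih,
      filter_map_filter' (fun J => J ∩ A1) _ _ (by intro x hx; simp at hx; simp [hx])]
    by_cases hB : B ∩ A1 = ∅
    · have h1 : ((a.map fun Ai => Ai ∩ B).map fun J => J ∩ A1).filter
          (fun J => (J ≠ ∅ : Prop)) = [] := by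
        simp only [List.map_map]
        rw [List.filter_eq_nil_iff]
        intro J hJ
        simp only [List.mem_map, Function.comp] at hJ
        obtain ⟨Ai, -, rfl⟩ := hJ
        simp [Finset.inter_assoc, hB]
      rw [h1, List.nil_append]
      simp [List.filter_cons, hB, seqMul_cons]
    · rw [List.map_cons, List.filter_cons, if_pos (by simpa using hB)]
      rw [seqMul_cons,
        filter_map_filter' (fun J => J ∩ (B ∩ A1)) _ _
          (by intro x hx; simp at hx; simp [hx])]
      congr 2
      simp only [List.map_map, List.map_map]
      apply List.map_congr_left
      intro Ai _
      simp only [Function.comp]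
      rw [Finset.inter_assoc, Finset.inter_assoc, Finset.inter_comm B A1,
        ← Finset.inter_assoc A1 A1, Finset.inter_self]

lemma facSeq_seqMul (A1 B1 : Finset α) (a b : List (Finset α)) :
    facSeq A1 B1 (seqMul a b) =
      (seqMul (facSeq A1 B1 a).1 (facSeq A1 B1 b).1,
       seqMul (facSeq A1 B1 a).2 (facSeq A1 B1 b).2) :=
  congrArg₂ Prod.mk (trace_seqMul A1 a b) (trace_seqMul B1 a b)

lemma Fac_zero (A1 B1 : Finset α) : Fac A1 B1 (0 : AX α) = 0 := by simp [Fac]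

lemma Fac_add (A1 B1 : Finset α) (x y : AX α) :
    Fac A1 B1 (x + y) = Fac A1 B1 x + Fac A1 B1 y := by
  unfold Fac
  exact Finsupp.sum_add_index' (by simp) (by intros; rw [Finsupp.single_add])

lemma Fac_single (A1 B1 : Finset α) (c : List (Finset α)) (v : ℂ) :
    Fac A1 B1 (Finsupp.single c v) = Finsupp.single (facSeq A1 B1 c) v := by
  by_cases hv : v = 0
  · simp [hv, Fac_zero]
  · simp [Fac, Finsupp.sum_single_index]

lemma zero_amul (y : AX α) : amul 0 y = 0 := by simp [amul]

lemma amul_zero (x : AX α) : amul x 0 = 0 := by simp [amul]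

lemma add_amul (x y z : AX α) : amul (x + y) z = amul x z + amul y z := by
  unfold amul
  exact Finsupp.sum_add_index' (by simp)
    (by intros; simp [add_mul, Finsupp.single_add, Finsupp.sum_add])

lemma amul_add (x y z : AX α) : amul x (y + z) = amul x y + amul x z := by
  unfold amul
  rw [← Finsupp.sum_add]
  congr 1
  funext a ca
  exact Finsupp.sum_add_index' (by simp) (by intros; simp [mul_add, Finsupp.single_add])

lemma amul_single_single (a b : List (Finset α)) (ca cb : ℂ) :
    amul (Finsupp.single a ca) (Finsupp.single b cb) =
      Finsupp.single (seqMul a b) (ca * cb) := by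
  by_cases ha : ca = 0
  · simp [ha, zero_amul]
  · by_cases hb : cb = 0
    · simp [hb, amul_zero]
    · simp [amul, Finsupp.sum_single_index]

lemma zero_tmul (y : AX2 α) : tmul 0 y = 0 := by simp [tmul]

lemma tmul_zero (x : AX2 α) : tmul x 0 = 0 := by simp [tmul]

lemma add_tmul (x y z : AX2 α) : tmul (x + y) z = tmul x z + tmul y z := by
  unfold tmul
  exact Finsupp.sum_add_index' (by simp)
    (by intros; simp [add_mul, Finsupp.single_add, Finsupp.sum_add])

lemma tmul_add (x y z : AX2 α) : tmul x (y + z) = tmul x y + tmul x z := by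
  unfold tmul
  rw [← Finsupp.sum_add]
  congr 1
  funext a ca
  exact Finsupp.sum_add_index' (by simp) (by intros; simp [mul_add, Finsupp.single_add])

lemma tmul_single_single (a b : List (Finset α) × List (Finset α)) (ca cb : ℂ) :
    tmul (Finsupp.single a ca) (Finsupp.single b cb) =
      Finsupp.single (seqMul a.1 b.1, seqMul a.2 b.2) (ca * cb) := by
  by_cases ha : ca = 0
  · simp [ha, zero_tmul]
  · by_cases hb : cb = 0
    · simp [hb, tmul_zero]
    · simp [tmul, Finsupp.sum_single_index]

lemma Fac_amul_single (A1 B1 : Finset α) (a : List (Finset α)) (ca : ℂ) (y : AX α) :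
    Fac A1 B1 (amul (Finsupp.single a ca) y) =
      tmul (Fac A1 B1 (Finsupp.single a ca)) (Fac A1 B1 y) := by
  induction y using Finsupp.induction with
  | zero => simp [amul_zero, Fac_zero, tmul_zero]
  | single_add b cb y' _ _ ihy =>
    rw [amul_add, Fac_add, Fac_add, tmul_add, ihy]
    congr 1
    rw [amul_single_single, Fac_single, Fac_single, Fac_single,
      tmul_single_single, facSeq_seqMul]

lemma Fac_amul (A1 B1 : Finset α) (x y : AX α) :
    Fac A1 B1 (amul x y) = tmul (Fac A1 B1 x) (Fac A1 B1 y) := by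
  induction x using Finsupp.induction with
  | zero => simp [zero_amul, Fac_zero, zero_tmul]
  | single_add a ca x' _ _ ihx =>
    rw [add_amul, Fac_add, Fac_add, add_tmul, ihx, Fac_amul_single]

/-- `Fac` is an algebra homomorphism: `Fac(cf) = Fac(c)·Fac(f)`. -/
theorem Fac_mul {α : Type*} [DecidableEq α] (A B : Finset α) (o : α)
    (hA : A.Nonempty) (hB : B.Nonempty) (hAB : Disjoint A B)
    (hoA : o ∉ A) (hoB : o ∉ B)
    (X : Finset α) (hX : X = insert o (A ∪ B))
    (c f : AX α)
    (hc : ∀ d ∈ c.support, IsProperSeq X d)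
    (hf : ∀ d ∈ f.support, IsProperSeq X d) :
    Fac (insert o A) (insert o B) (amul c f) =
      tmul (Fac (insert o A) (insert o B) c) (Fac (insert o A) (insert o B) f) :=
  Fac_amul (insert o A) (insert o B) c f

end GRF
end

section
/- Let X = A ∪ B ∪ {1} as above, and let 1 ∈ I ∈ P_*(X) with I' = X∖I satisfy I ⊄ A, I' ⊄ A, I ⊄ B, I' ⊄ B. For the paracell S = {I} with opposite S' = {I'}, one has U_S = {X} − {I', I}, and Fac(U_S) = {A∪{1}} ⊗ {B∪{1}} − {I'∩A, I∩(A∪{1})} ⊗ {I'∩B, I∩(B∪{1})}; in particular Fac(U_S) is not of the form u ⊗ v with u, v each being an alternating chain sum U over paracells built from S by the (·‖1,A), (·‖1,B) construction, since (S‖1,A), (S'‖1,A), (S‖1,B), (S'‖1,B) are all empty. -/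
open scoped Classical

namespace GRF

variable {α : Type*} [DecidableEq α]

lemma chain_classify (X I : Finset α) (hIX : I ⊆ X) (hIne : I ≠ ∅) (hInX : I ≠ X)
    (c : List (Finset α)) :
    IsChainFor X ({X \ I} : Set (Finset α)) c ↔ c = [X] ∨ c = [X \ I, I] := by
  constructor
  · rintro ⟨⟨hne, hmem, hpw, hun⟩, hch⟩
    match c with
    | [] => exact absurd rfl hne
    | [J] =>
      left
      simp only [List.foldr] at hun
      rw [Finset.union_empty] at hun
      rw [hun]
    | [J1, J2] =>
      right
      have h1 := hch 1 (by norm_num) (by norm_num)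
      simp only [List.take, List.foldr, Finset.union_empty, Set.mem_singleton_iff] at h1
      simp only [List.foldr, Finset.union_empty] at hun
      have hd : J1 ∩ J2 = ∅ := (List.pairwise_cons.mp hpw).1 J2 (by simp)
      have hJ2 : J2 = X \ J1 := by
        ext x
        simp only [Finset.mem_sdiff]
        constructor
        · intro hx
          refine ⟨hun ▸ Finset.mem_union_right _ hx, fun hx1 => ?_⟩
          have : x ∈ J1 ∩ J2 := Finset.mem_inter.mpr ⟨hx1, hx⟩
          simp [hd] at this
        · rintro ⟨hxX, hx1⟩
          rcases Finset.mem_union.mp (hun ▸ hxX) with h | h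
          · exact absurd h hx1
          · exact h
      rw [h1, hJ2, h1, Finset.sdiff_sdiff_eq_self hIX]
    | J1 :: J2 :: J3 :: rest =>
      exfalso
      have h1 := hch 1 (by norm_num) (by simp)
      have h2 := hch 2 (by norm_num) (by simp)
      simp only [List.take, List.foldr, Finset.union_empty, Set.mem_singleton_iff] at h1 h2
      have hd : J1 ∩ J2 = ∅ := (List.pairwise_cons.mp hpw).1 J2 (by simp)
      have hJ2 : J2 ⊆ J1 := by
        intro x hx
        have hthis : x ∈ J1 ∪ J2 := Finset.mem_union_right _ hx
        rw [h2, ← h1] at hthis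
        exact hthis
      have hJ2e : J2 = ∅ := by
        have h3 : J1 ∩ J2 = J2 := Finset.inter_eq_right.mpr hJ2
        rw [hd] at h3
        exact h3.symm
      exact hmem J2 (by simp) hJ2e
  · have hXne : X ≠ ∅ := fun h => hIne (Finset.subset_empty.mp (h ▸ hIX))
    have hI'ne : X \ I ≠ ∅ := by
      intro h
      exact hInX (Finset.Subset.antisymm hIX (fun x hx => by
        by_contra hxI
        have : x ∈ X \ I := Finset.mem_sdiff.mpr ⟨hx, hxI⟩
        simp [h] at this))
    rintro (rfl | rfl)
    · refine ⟨⟨by simp, ?_, ?_, ?_⟩, ?_⟩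
      · intro J hJ; simp at hJ; subst hJ; exact hXne
      · simp
      · simp
      · intro r hr hr'; simp at hr'; omega
    · refine ⟨⟨by simp, ?_, ?_, ?_⟩, ?_⟩
      · intro J hJ
        simp only [List.mem_cons, List.not_mem_nil, or_false] at hJ
        rcases hJ with rfl | rfl
        · exact hI'ne
        · exact hIne
      · refine List.pairwise_cons.mpr ⟨?_, by simp⟩
        intro J hJ; simp at hJ; subst hJ
        simp [Finset.sdiff_inter_self]
      · simp [Finset.sdiff_union_of_subset hIX]
      · intro r hr hr'
        simp only [List.length_cons, List.length_nil] at hr'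
        interval_cases r
        simp

/-- For the paracell `S = {I}` with `1 ∈ I` and `I, I'` not contained in `A` or `B`:
`U_S = {X} − {I', I}`, its factorization is the indicated difference of tensors, and
the four sets `(S‖1,A)`, `(S'‖1,A)`, `(S‖1,B)`, `(S'‖1,B)` are empty. -/
theorem singleton_paracell_Fac {α : Type*} [DecidableEq α] [Fintype α]
    (A B : Finset α) (o : α)
    (hA : A.Nonempty) (hB : B.Nonempty) (hAB : Disjoint A B)
    (hoA : o ∉ A) (hoB : o ∉ B)
    (X : Finset α) (hX : X = insert o (A ∪ B))
    (I : Finset α) (hoI : o ∈ I) (hI : IsProperSubset X I)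
    (hIA : ¬ I ⊆ A) (hI'A : ¬ (X \ I) ⊆ A)
    (hIB : ¬ I ⊆ B) (hI'B : ¬ (X \ I) ⊆ B) :
    US X ({X \ I} : Set (Finset α)) =
      oneA X - Finsupp.single [X \ I, I] 1 ∧
    Fac (insert o A) (insert o B) (US X ({X \ I} : Set (Finset α))) =
      Finsupp.single (([insert o A], [insert o B]) :
          List (Finset α) × List (Finset α)) (1 : ℂ) -
      Finsupp.single (([(X \ I) ∩ A, I ∩ insert o A],
          [(X \ I) ∩ B, I ∩ insert o B]) :
          List (Finset α) × List (Finset α)) (1 : ℂ) ∧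
    restCell A o ({I} : Set (Finset α)) ({X \ I} : Set (Finset α)) = ∅ ∧
    restCell A o ({X \ I} : Set (Finset α)) ({I} : Set (Finset α)) = ∅ ∧
    restCell B o ({I} : Set (Finset α)) ({X \ I} : Set (Finset α)) = ∅ ∧
    restCell B o ({X \ I} : Set (Finset α)) ({I} : Set (Finset α)) = ∅ := by
  obtain ⟨hIX, hIne, hInX⟩ := hI
  have hneq : ([X] : List (Finset α)) ≠ [X \ I, I] := by
    intro h; simpa using congrArg List.length h
  have hUS : US X ({X \ I} : Set (Finset α)) =
      oneA X - Finsupp.single [X \ I, I] 1 := by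
    ext c
    have hL : US X ({X \ I} : Set (Finset α)) c =
        if IsChainFor X ({X \ I} : Set (Finset α)) c
        then (-1 : ℂ) ^ (c.length - 1) else 0 := rfl
    rw [hL, Finsupp.sub_apply, oneA, Finsupp.single_apply, Finsupp.single_apply]
    by_cases h1 : c = [X]
    · subst h1
      rw [if_pos ((chain_classify X I hIX hIne hInX _).mpr (Or.inl rfl))]
      simp [hneq.symm]
    · by_cases h2 : c = [X \ I, I]
      · subst h2
        rw [if_pos ((chain_classify X I hIX hIne hInX _).mpr (Or.inr rfl))]
        simp [hneq]
      · rw [if_neg (fun h => by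
          rcases (chain_classify X I hIX hIne hInX _).mp h with h | h
          exacts [h1 h, h2 h])]
        simp [Ne.symm h1, Ne.symm h2]
  refine ⟨hUS, ?_, ?_, ?_, ?_, ?_⟩
  · -- Fac computation
    rw [hUS]
    rw [Fac, Finsupp.sum_sub_index (fun a b₁ b₂ => Finsupp.single_sub _ b₁ b₂)]
    rw [oneA, Finsupp.sum_single_index (by simp), Finsupp.sum_single_index (by simp)]
    have hoAX : insert o A ⊆ X := by
      rw [hX]; intro x hx
      rcases Finset.mem_insert.mp hx with rfl | hx
      · exact Finset.mem_insert_self _ _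
      · exact Finset.mem_insert_of_mem (Finset.mem_union_left _ hx)
    have hoBX : insert o B ⊆ X := by
      rw [hX]; intro x hx
      rcases Finset.mem_insert.mp hx with rfl | hx
      · exact Finset.mem_insert_self _ _
      · exact Finset.mem_insert_of_mem (Finset.mem_union_right _ hx)
    have hoI' : o ∉ X \ I := fun h => (Finset.mem_sdiff.mp h).2 hoI
    have h1A : (X \ I) ∩ insert o A = (X \ I) ∩ A :=
      Finset.inter_insert_of_notMem hoI'
    have h1B : (X \ I) ∩ insert o B = (X \ I) ∩ B :=
      Finset.inter_insert_of_notMem hoI'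
    have hI'sub : X \ I ⊆ A ∪ B := by
      intro x hx
      have hxX := (Finset.mem_sdiff.mp hx).1
      rw [hX] at hxX
      rcases Finset.mem_insert.mp hxX with rfl | hx'
      · exact absurd hx hoI'
      · exact hx'
    have hI'Ane : (X \ I) ∩ A ≠ ∅ := by
      intro h
      apply hI'B
      intro x hx
      rcases Finset.mem_union.mp (hI'sub hx) with hxa | hxb
      · have : x ∈ (X \ I) ∩ A := Finset.mem_inter.mpr ⟨hx, hxa⟩
        simp [h] at this
      · exact hxb
    have hI'Bne : (X \ I) ∩ B ≠ ∅ := by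
      intro h
      apply hI'A
      intro x hx
      rcases Finset.mem_union.mp (hI'sub hx) with hxa | hxb
      · exact hxa
      · have : x ∈ (X \ I) ∩ B := Finset.mem_inter.mpr ⟨hx, hxb⟩
        simp [h] at this
    have hIAne : I ∩ insert o A ≠ ∅ := by
      intro h
      have : o ∈ I ∩ insert o A :=
        Finset.mem_inter.mpr ⟨hoI, Finset.mem_insert_self _ _⟩
      simp [h] at this
    have hIBne : I ∩ insert o B ≠ ∅ := by
      intro h
      have : o ∈ I ∩ insert o B :=
        Finset.mem_inter.mpr ⟨hoI, Finset.mem_insert_self _ _⟩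
      simp [h] at this
    have hXA : X ∩ insert o A = insert o A := Finset.inter_eq_right.mpr hoAX
    have hXB : X ∩ insert o B = insert o B := Finset.inter_eq_right.mpr hoBX
    have hoAne : (insert o A : Finset α) ≠ ∅ := by simp
    have hoBne : (insert o B : Finset α) ≠ ∅ := by simp
    congr 1
    · congr 1
      simp [facSeq, hXA, hXB, hoAne, hoBne]
    · congr 1
      simp [facSeq, h1A, h1B, hI'Ane, hI'Bne, hIAne, hIBne]
  · rw [Set.eq_empty_iff_forall_notMem]
    intro J hJ
    simp only [restCell, Set.mem_setOf_eq, Set.mem_singleton_iff] at hJ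
    rcases hJ with ⟨-, ⟨hJA, rfl⟩ | ⟨hoJ, hAJ⟩⟩
    · exact hIA hJA
    · exact hI'A (hAJ ▸ Finset.sdiff_subset)
  · rw [Set.eq_empty_iff_forall_notMem]
    intro J hJ
    simp only [restCell, Set.mem_setOf_eq, Set.mem_singleton_iff] at hJ
    rcases hJ with ⟨-, ⟨hJA, rfl⟩ | ⟨hoJ, hAJ⟩⟩
    · exact hI'A hJA
    · exact hIA (hAJ ▸ Finset.sdiff_subset)
  · rw [Set.eq_empty_iff_forall_notMem]
    intro J hJ
    simp only [restCell, Set.mem_setOf_eq, Set.mem_singleton_iff] at hJ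
    rcases hJ with ⟨-, ⟨hJB, rfl⟩ | ⟨hoJ, hBJ⟩⟩
    · exact hIB hJB
    · exact hI'B (hBJ ▸ Finset.sdiff_subset)
  · rw [Set.eq_empty_iff_forall_notMem]
    intro J hJ
    simp only [restCell, Set.mem_setOf_eq, Set.mem_singleton_iff] at hJ
    rcases hJ with ⟨-, ⟨hJB, rfl⟩ | ⟨hoJ, hBJ⟩⟩
    · exact hI'B hJB
    · exact hIB (hBJ ▸ Finset.sdiff_subset)

end GRF
end

section
/- Let C, B be disjoint nonempty finite sets, 1, 2 two distinct elements not in C ∪ B, A = C ∪ {2}, X = A ∪ B ∪ {1}, and let V, V' be opposite cells relative to C ∪ B. With T = 2↓V and T' = 2↑V' (opposite cells relative to A∪B), one has the identities (1↑2↑V'‖1,A) = 2↑(1↑V'‖1,C) and (1↓2↓V‖1,A) = 2↓(1↓V‖1,C) as cells relative to A∪{1} = C∪{1,2}. -/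
open scoped Classical

namespace GRF

variable {α : Type*} [DecidableEq α]

/-- `(1↑2↑V'‖1,A) = 2↑(1↑V'‖1,C)` and `(1↓2↓V‖1,A) = 2↓(1↓V‖1,C)` as cells relative
to `A ∪ {1} = C ∪ {1,2}`, where `A = C ∪ {2}`. -/
theorem restCell_recursion {α : Type*} [DecidableEq α] (C B : Finset α) (o t : α)
    (hC : C.Nonempty) (hB : B.Nonempty) (hCB : Disjoint C B)
    (hot : o ≠ t) (hoCB : o ∉ C ∪ B) (htCB : t ∉ C ∪ B)
    (V : Set (Finset α)) (hV : IsCell (C ∪ B) V) :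
    restCell (insert t C) o
        (cellUp {o} (insert t C ∪ B) (cellUp {t} (C ∪ B) (opp (C ∪ B) V)))
        (cellDown {o} (insert t C ∪ B) (cellDown {t} (C ∪ B) V)) =
      cellUp {t} (insert o C)
        (restCell C o (cellUp {o} (C ∪ B) (opp (C ∪ B) V))
          (cellDown {o} (C ∪ B) V)) ∧
    restCell (insert t C) o
        (cellDown {o} (insert t C ∪ B) (cellDown {t} (C ∪ B) V))
        (cellUp {o} (insert t C ∪ B) (cellUp {t} (C ∪ B) (opp (C ∪ B) V))) =
      cellDown {t} (insert o C)
        (restCell C o (cellDown {o} (C ∪ B) V)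
          (cellUp {o} (C ∪ B) (opp (C ∪ B) V))) := by
  obtain ⟨b, hb⟩ := hB
  simp only [Finset.mem_union, not_or] at hoCB htCB
  obtain ⟨hoC, hoB⟩ := hoCB
  obtain ⟨htC, htB⟩ := htCB
  have hbC : b ∉ C := fun h => Finset.disjoint_left.mp hCB h hb
  have hbo : b ≠ o := fun h => hoB (h ▸ hb)
  have hbt : b ≠ t := fun h => htB (h ▸ hb)
  have hVp : ∀ J ∈ V, J ⊆ C ∪ B ∧ J ≠ ∅ ∧ J ≠ C ∪ B := fun J hJ => hV.1.1.2.1 J hJ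
  -- generic "not equal" helper
  have hneOf : ∀ (x : α) (S T : Finset α), x ∉ S → x ∈ T → S ≠ T :=
    fun x S T hS hT h => hS (h ▸ hT)
  have hoA : o ∉ insert t C := by simp [hot, hoC]
  have hbtC : b ∉ insert t C := by simp [hbt, hbC]
  have hbX : b ∈ C ∪ B := Finset.mem_union_right _ hb
  have hb1 : b ∈ ({o} : Finset α) ∪ (insert t C ∪ B) := by simp [hb]
  have hb2 : b ∈ ({t} : Finset α) ∪ (C ∪ B) := by simp [hb]
  have hb3 : b ∈ insert t C ∪ B := Finset.mem_union_right _ hb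
  have hb5 : b ∈ ({o} : Finset α) ∪ (C ∪ B) := by simp [hb]
  have hbtop : b ∉ insert o (insert t C) := by simp [hbo, hbt, hbC]
  have hins : ({t} : Finset α) ∪ insert o C = insert o (insert t C) := by
    ext x; simp only [Finset.mem_union, Finset.mem_insert, Finset.mem_singleton]; tauto
  have hnB : ∀ x ∈ insert o (insert t C), x ∉ B := by
    intro x hx
    rcases Finset.mem_insert.mp hx with rfl | hx
    · exact hoB
    · rcases Finset.mem_insert.mp hx with rfl | hx
      · exact htB
      · exact Finset.disjoint_left.mp hCB hx
  -- intersection computations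
  have h1 : ∀ S : Finset α, S ⊆ insert t C → S ∩ (insert t C ∪ B) = S :=
    fun S h => Finset.inter_eq_left.mpr (h.trans Finset.subset_union_left)
  have h2 : ∀ S : Finset α, S ⊆ insert o (insert t C) → S ∩ (C ∪ B) = S ∩ C := by
    intro S h
    ext x
    simp only [Finset.mem_inter, Finset.mem_union]
    constructor
    · rintro ⟨hx, hx2 | hx2⟩
      · exact ⟨hx, hx2⟩
      · exact absurd hx2 (hnB x (h hx))
    · rintro ⟨hx, hx2⟩
      exact ⟨hx, Or.inl hx2⟩
  have h3 : ∀ J : Finset α, (insert t C \ J) ∩ C = C \ J := by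
    intro J
    ext x
    simp only [Finset.mem_inter, Finset.mem_sdiff, Finset.mem_insert]
    tauto
  have h4 : ∀ J : Finset α, o ∉ J → J ∩ insert o C = J ∩ C := by
    intro J ho
    ext x
    simp only [Finset.mem_inter, Finset.mem_insert]
    constructor
    · rintro ⟨hx, rfl | hc⟩
      · exact absurd hx ho
      · exact ⟨hx, hc⟩
    · rintro ⟨hx, hc⟩
      exact ⟨hx, Or.inr hc⟩
  have h5 : ∀ J : Finset α, C \ (J ∩ insert o C) = C \ J := by
    intro J
    ext x
    simp only [Finset.mem_sdiff, Finset.mem_inter, Finset.mem_insert]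
    constructor
    · rintro ⟨hc, hn⟩
      exact ⟨hc, fun hj => hn ⟨hj, Or.inr hc⟩⟩
    · rintro ⟨hc, hn⟩
      exact ⟨hc, fun h => hn h.1⟩
  have h6 : ∀ S : Finset α, S ⊆ C → S ∩ (C ∪ B) = S :=
    fun S h => Finset.inter_eq_left.mpr (h.trans Finset.subset_union_left)
  -- subset chains
  have hsub1 : ∀ S : Finset α, S ⊆ insert t C → S ⊆ {o} ∪ (insert t C ∪ B) :=
    fun S h => h.trans (Finset.subset_union_left.trans Finset.subset_union_right)
  have hA2 : insert t C ⊆ ({t} : Finset α) ∪ (C ∪ B) := by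
    intro x hx
    rcases Finset.mem_insert.mp hx with rfl | hx
    · exact Finset.mem_union_left _ (Finset.mem_singleton_self x)
    · exact Finset.mem_union_right _ (Finset.mem_union_left _ hx)
  have hsub2 : ∀ S : Finset α, S ⊆ insert t C → S ⊆ ({t} : Finset α) ∪ (C ∪ B) :=
    fun S h => h.trans hA2
  have hsub3 : ∀ S : Finset α, S ⊆ C → S ⊆ ({o} : Finset α) ∪ (C ∪ B) :=
    fun S h => h.trans (Finset.subset_union_left.trans Finset.subset_union_right)
  -- nonempty facts from V
  have hVne' : ∀ S : Finset α, (C ∪ B) \ S ∈ V → S ≠ ∅ := by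
    rintro S hS rfl
    exact (hVp _ hS).2.2 (by rw [Finset.sdiff_empty])
  have hMne : ∀ J : Finset α, J ⊆ insert o (insert t C) → o ∈ J →
      J ≠ insert o (insert t C) → insert t C \ J ≠ ∅ := by
    intro J hJs hoJ hJtop h
    apply hJtop
    apply Finset.Subset.antisymm hJs
    intro x hx
    rcases Finset.mem_insert.mp hx with rfl | hx
    · exact hoJ
    · exact Finset.sdiff_eq_empty_iff_subset.mp h hx
  have hMsub : ∀ J : Finset α, insert t C \ J ⊆ insert t C := fun J => Finset.sdiff_subset
  constructor
  · ext J
    simp only [restCell, cellUp, cellDown, opp, Set.mem_setOf_eq, IsProperSubset]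
    constructor
    · rintro ⟨⟨hJs, hJne, hJtop⟩, hcase⟩
      refine ⟨⟨by rw [hins]; exact hJs, hJne, by rw [hins]; exact hJtop⟩, ?_⟩
      rcases hcase with ⟨hJA, -, hmain⟩ | ⟨hoJ, ⟨-, -, -⟩, hmain⟩
      · -- case J ⊆ insert t C
        have hoJ : o ∉ J := fun h => hoA (hJA h)
        rw [h1 J hJA, h2 J hJs] at hmain
        rcases hmain with rfl | ⟨-, hmain2⟩
        · exact absurd rfl hJne
        rcases hmain2 with h0 | ⟨-, hVmem⟩
        · exact Or.inl (by rw [h4 J hoJ, h0])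
        · have hKne : J ∩ C ≠ ∅ := hVne' _ hVmem
          have hKeq : J ∩ insert o C = J ∩ C := h4 J hoJ
          have hoK : o ∉ J ∩ insert o C := fun h => hoJ (Finset.mem_inter.mp h).1
          refine Or.inr ⟨⟨Finset.inter_subset_right, by rw [hKeq]; exact hKne,
            hneOf o _ _ hoK (Finset.mem_insert_self o C)⟩, Or.inl ?_⟩
          refine ⟨by rw [hKeq]; exact Finset.inter_subset_right,
            ⟨?_, by rw [hKeq]; exact hKne, hneOf o _ _ hoK (by simp)⟩, Or.inr ?_⟩
          · rw [hKeq]; exact hsub3 _ Finset.inter_subset_right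
          · rw [hKeq, h6 _ Finset.inter_subset_right]
            exact ⟨Finset.inter_subset_right.trans Finset.subset_union_left, hVmem⟩
      · -- case o ∈ J
        set M := insert t C \ J with hM
        have hMA : M ⊆ insert t C := hMsub J
        rw [h1 M hMA, h2 M (hMA.trans (Finset.subset_insert o _)), h3 J] at hmain
        rcases hmain with hbad | ⟨-, hmain2⟩
        · exact absurd hbad (hneOf b _ _ (fun h => hbtC (hMA h)) hb3)
        rcases hmain2 with hbad | hCJ
        · exact absurd hbad (hneOf b _ _ (fun h => hbC (Finset.mem_sdiff.mp h).1) hbX)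
        have hCJne : C \ J ≠ ∅ := (hVp _ hCJ).2.1
        have hKtop : J ∩ insert o C ≠ insert o C := by
          intro h
          apply hCJne
          rw [Finset.sdiff_eq_empty_iff_subset]
          intro x hx
          have : x ∈ J ∩ insert o C := by rw [h]; exact Finset.mem_insert_of_mem hx
          exact (Finset.mem_inter.mp this).1
        have hoK : o ∈ J ∩ insert o C :=
          Finset.mem_inter.mpr ⟨hoJ, Finset.mem_insert_self o C⟩
        refine Or.inr ⟨⟨Finset.inter_subset_right, Finset.ne_empty_of_mem hoK, hKtop⟩,
          Or.inr ⟨hoK, ⟨?_, by rw [h5 J]; exact hCJne,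
            hneOf o _ _ (fun h => hoC (Finset.mem_sdiff.mp h).1) (by simp)⟩, Or.inr ?_⟩⟩
        · rw [h5 J]; exact hsub3 _ Finset.sdiff_subset
        · rw [h5 J, h6 _ Finset.sdiff_subset]
          exact hCJ
    · rintro ⟨⟨hJs, hJne, hJtop⟩, hcase⟩
      rw [hins] at hJs hJtop
      refine ⟨⟨hJs, hJne, hJtop⟩, ?_⟩
      rcases hcase with hK0 | ⟨⟨-, hKne, hKtop⟩, hinner⟩
      · -- K = ∅, i.e. J = {t}
        have hoJ : o ∉ J := fun h => by
          have : o ∈ J ∩ insert o C := Finset.mem_inter.mpr ⟨h, Finset.mem_insert_self o C⟩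
          rw [hK0] at this
          exact absurd this (Finset.notMem_empty o)
        have hJA : J ⊆ insert t C := by
          intro x hx
          rcases Finset.mem_insert.mp (hJs hx) with rfl | hx2
          · exact absurd hx hoJ
          · exact hx2
        have hJC0 : J ∩ C = ∅ := by rw [← h4 J hoJ]; exact hK0
        refine Or.inl ⟨hJA, ⟨hsub1 J hJA, hJne, hneOf b _ _ (fun h => hbtC (hJA h)) hb1⟩, ?_⟩
        rw [h1 J hJA, h2 J hJs]
        exact Or.inr ⟨⟨hsub2 J hJA, hJne, hneOf b _ _ (fun h => hbtC (hJA h)) hb2⟩,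
          Or.inl hJC0⟩
      rcases hinner with ⟨hKCsub, -, hin⟩ | ⟨hoK, ⟨-, hCKne, -⟩, hin2⟩
      · -- K ⊆ C case
        have hoJ : o ∉ J := fun h =>
          hoC (hKCsub (Finset.mem_inter.mpr ⟨h, Finset.mem_insert_self o C⟩))
        have hJA : J ⊆ insert t C := by
          intro x hx
          rcases Finset.mem_insert.mp (hJs hx) with rfl | hx2
          · exact absurd hx hoJ
          · exact hx2
        have hKeq : J ∩ insert o C = J ∩ C := h4 J hoJ
        rw [h6 _ hKCsub] at hin
        rcases hin with h0 | ⟨-, hWV⟩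
        · exact absurd h0 hKne
        refine Or.inl ⟨hJA, ⟨hsub1 J hJA, hJne, hneOf b _ _ (fun h => hbtC (hJA h)) hb1⟩, ?_⟩
        rw [h1 J hJA, h2 J hJs]
        refine Or.inr ⟨⟨hsub2 J hJA, hJne, hneOf b _ _ (fun h => hbtC (hJA h)) hb2⟩,
          Or.inr ⟨Finset.inter_subset_right.trans Finset.subset_union_left, ?_⟩⟩
        rw [← hKeq]
        exact hWV
      · -- o ∈ K case
        have hoJ : o ∈ J := (Finset.mem_inter.mp hoK).1
        rw [h5 J] at hCKne
        rw [h5 J, h6 _ Finset.sdiff_subset] at hin2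
        rcases hin2 with hbad | hCJV
        · exact absurd hbad (hneOf b _ _ (fun h => hbC (Finset.mem_sdiff.mp h).1) hbX)
        set M := insert t C \ J with hM
        have hMA : M ⊆ insert t C := hMsub J
        have hMne' : M ≠ ∅ := hMne J hJs hoJ hJtop
        refine Or.inr ⟨hoJ, ⟨hsub1 M hMA, hMne',
          hneOf o _ _ (fun h => hoA (hMA h)) (by simp)⟩, ?_⟩
        rw [h1 M hMA, h2 M (hMA.trans (Finset.subset_insert o _)), h3 J]
        refine Or.inr ⟨⟨hsub2 M hMA, hMne', hneOf b _ _ (fun h => hbtC (hMA h)) hb2⟩,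
          Or.inr hCJV⟩
  · ext J
    simp only [restCell, cellUp, cellDown, opp, Set.mem_setOf_eq, IsProperSubset]
    constructor
    · rintro ⟨⟨hJs, hJne, hJtop⟩, hcase⟩
      refine ⟨⟨by rw [hins]; exact hJs, hJne, by rw [hins]; exact hJtop⟩, ?_⟩
      rcases hcase with ⟨hJA, -, hmain⟩ | ⟨hoJ, ⟨-, -, -⟩, hmain⟩
      · -- case J ⊆ insert t C
        have hoJ : o ∉ J := fun h => hoA (hJA h)
        rw [h1 J hJA, h2 J hJs] at hmain
        rcases hmain with hbad | ⟨-, hmain2⟩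
        · exact absurd hbad (hneOf b _ _ (fun h => hbtC (hJA h)) hb3)
        rcases hmain2 with hbad | hKV
        · exact absurd hbad
            (hneOf b _ _ (fun h => hbC (Finset.inter_subset_right h)) hbX)
        have hKne : J ∩ C ≠ ∅ := (hVp _ hKV).2.1
        have hKeq : J ∩ insert o C = J ∩ C := h4 J hoJ
        have hoK : o ∉ J ∩ insert o C := fun h => hoJ (Finset.mem_inter.mp h).1
        refine Or.inr ⟨⟨Finset.inter_subset_right, by rw [hKeq]; exact hKne,
          hneOf o _ _ hoK (Finset.mem_insert_self o C)⟩, Or.inl ?_⟩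
        refine ⟨by rw [hKeq]; exact Finset.inter_subset_right,
          ⟨by rw [hKeq]; exact hsub3 _ Finset.inter_subset_right,
            by rw [hKeq]; exact hKne, hneOf o _ _ hoK (by simp)⟩, Or.inr ?_⟩
        rw [hKeq, h6 _ Finset.inter_subset_right]
        exact hKV
      · -- case o ∈ J
        set M := insert t C \ J with hM
        have hMA : M ⊆ insert t C := hMsub J
        have hMne' : M ≠ ∅ := hMne J hJs hoJ hJtop
        rw [h1 M hMA, h2 M (hMA.trans (Finset.subset_insert o _)), h3 J] at hmain
        rcases hmain with hbad | ⟨-, hmain2⟩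
        · exact absurd hbad hMne'
        rcases hmain2 with hCJ0 | ⟨-, hCJV⟩
        · -- C \ J = ∅, so insert o C ⊆ J
          refine Or.inl (Finset.inter_eq_right.mpr ?_)
          intro x hx
          rcases Finset.mem_insert.mp hx with rfl | hx2
          · exact hoJ
          · by_contra hxJ
            have : x ∈ C \ J := Finset.mem_sdiff.mpr ⟨hx2, hxJ⟩
            rw [hCJ0] at this
            exact absurd this (Finset.notMem_empty x)
        · have hCJne : C \ J ≠ ∅ := hVne' _ hCJV
          have hKtop : J ∩ insert o C ≠ insert o C := by
            intro h
            apply hCJne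
            rw [Finset.sdiff_eq_empty_iff_subset]
            intro x hx
            have : x ∈ J ∩ insert o C := by rw [h]; exact Finset.mem_insert_of_mem hx
            exact (Finset.mem_inter.mp this).1
          have hoK : o ∈ J ∩ insert o C :=
            Finset.mem_inter.mpr ⟨hoJ, Finset.mem_insert_self o C⟩
          refine Or.inr ⟨⟨Finset.inter_subset_right, Finset.ne_empty_of_mem hoK, hKtop⟩,
            Or.inr ⟨hoK, ⟨by rw [h5 J]; exact hsub3 _ Finset.sdiff_subset,
              by rw [h5 J]; exact hCJne,
              hneOf o _ _ (fun h => hoC (Finset.mem_sdiff.mp h).1) (by simp)⟩, Or.inr ?_⟩⟩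
          rw [h5 J, h6 _ Finset.sdiff_subset]
          exact ⟨Finset.sdiff_subset.trans Finset.subset_union_left, hCJV⟩
    · rintro ⟨⟨hJs, hJne, hJtop⟩, hcase⟩
      rw [hins] at hJs hJtop
      refine ⟨⟨hJs, hJne, hJtop⟩, ?_⟩
      rcases hcase with hK1 | ⟨⟨-, hKne, hKtop⟩, hinner⟩
      · -- insert o C ⊆ J
        have hoCJ : insert o C ⊆ J := Finset.inter_eq_right.mp hK1
        have hoJ : o ∈ J := hoCJ (Finset.mem_insert_self o C)
        have hCJ0 : C \ J = ∅ := Finset.sdiff_eq_empty_iff_subset.mpr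
          (fun x hx => hoCJ (Finset.mem_insert_of_mem hx))
        set M := insert t C \ J with hM
        have hMA : M ⊆ insert t C := hMsub J
        have hMne' : M ≠ ∅ := hMne J hJs hoJ hJtop
        refine Or.inr ⟨hoJ, ⟨hsub1 M hMA, hMne',
          hneOf o _ _ (fun h => hoA (hMA h)) (by simp)⟩, ?_⟩
        rw [h1 M hMA, h2 M (hMA.trans (Finset.subset_insert o _)), h3 J]
        exact Or.inr ⟨⟨hsub2 M hMA, hMne', hneOf b _ _ (fun h => hbtC (hMA h)) hb2⟩,
          Or.inl hCJ0⟩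
      rcases hinner with ⟨hKCsub, -, hin⟩ | ⟨hoK, ⟨-, hCKne, -⟩, hin2⟩
      · -- K ⊆ C case
        have hoJ : o ∉ J := fun h =>
          hoC (hKCsub (Finset.mem_inter.mpr ⟨h, Finset.mem_insert_self o C⟩))
        have hJA : J ⊆ insert t C := by
          intro x hx
          rcases Finset.mem_insert.mp (hJs hx) with rfl | hx2
          · exact absurd hx hoJ
          · exact hx2
        have hKeq : J ∩ insert o C = J ∩ C := h4 J hoJ
        rw [h6 _ hKCsub] at hin
        rcases hin with hbad | hKV
        · exact absurd hbad (hneOf b _ _ (fun h => hbC (hKCsub h)) hbX)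
        refine Or.inl ⟨hJA, ⟨hsub1 J hJA, hJne, hneOf b _ _ (fun h => hbtC (hJA h)) hb1⟩, ?_⟩
        rw [h1 J hJA, h2 J hJs]
        refine Or.inr ⟨⟨hsub2 J hJA, hJne, hneOf b _ _ (fun h => hbtC (hJA h)) hb2⟩,
          Or.inr ?_⟩
        rw [← hKeq]
        exact hKV
      · -- o ∈ K case
        have hoJ : o ∈ J := (Finset.mem_inter.mp hoK).1
        rw [h5 J] at hCKne
        rw [h5 J, h6 _ Finset.sdiff_subset] at hin2
        set M := insert t C \ J with hM
        have hMA : M ⊆ insert t C := hMsub J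
        have hMne' : M ≠ ∅ := hMne J hJs hoJ hJtop
        refine Or.inr ⟨hoJ, ⟨hsub1 M hMA, hMne',
          hneOf o _ _ (fun h => hoA (hMA h)) (by simp)⟩, ?_⟩
        rw [h1 M hMA, h2 M (hMA.trans (Finset.subset_insert o _)), h3 J]
        refine Or.inr ⟨⟨hsub2 M hMA, hMne', hneOf b _ _ (fun h => hbtC (hMA h)) hb2⟩, ?_⟩
        rcases hin2 with h0 | ⟨-, hCJV⟩
        · exact Or.inl h0
        · exact Or.inr ⟨Finset.sdiff_subset.trans Finset.subset_union_left, hCJV⟩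

end GRF
end
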